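/- For m ≥ 0 and 0 < β ≤ 1, define I_m(β) = ∫₀^∞∫₀^∞ exp(-(r - r')²/2 - β r r') (rr')^m dr dr'. Then I_m(β) ≤ (√(2π)/2) · β^{-m-1/2} · Γ(m + 1/2), and there exists an absolute constant b₀ > 0 (independent of m and β) such that I_m(β) ≥ b₀ · β^{-m-1/2} · Γ(m + 1/2) for all m ≥ 0 and 0 < β ≤ 1. -/

import Mathlib

open MeasureTheory Real

open Set Filter
open scoped ENNReal Topology

/-- The function `I_m(β)`. -/
noncomputable def Ifun (m β : ℝ) : ℝ :=
  ∫ r in Set.Ioi (0 : ℝ), ∫ r' in Set.Ioi (0 : ℝ),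
    Real.exp (-(r - r') ^ 2 / 2 - β * r * r') * (r * r') ^ m


/-- 1-D change of variables for lintegrals. -/
lemma lintegral_image_1d {s : Set ℝ} {f f' : ℝ → ℝ} (hs : MeasurableSet s)
    (hf' : ∀ x ∈ s, HasDerivWithinAt f (f' x) s x) (hf : Set.InjOn f s) (g : ℝ → ℝ≥0∞) :
    ∫⁻ x in f '' s, g x = ∫⁻ x in s, ENNReal.ofReal |f' x| * g (f x) := by
  simpa only [ContinuousLinearMap.det_toSpanSingleton] using
    lintegral_image_eq_lintegral_abs_det_fderiv_mul volume hs
      (fun x hx => (hf' x hx).hasFDerivWithinAt) hf g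

lemma lintegral_Ioi_zero_le {g : ℝ → ℝ≥0∞} (hg : Measurable g) {C : ℝ≥0∞}
    (h : ∀ ε : ℝ, 0 < ε → ∫⁻ x in Set.Ioi ε, g x ≤ C) :
    ∫⁻ x in Set.Ioi (0:ℝ), g x ≤ C := by
  have hmono : Monotone (fun n : ℕ => (Set.Ioi (((n:ℝ)+1)⁻¹)).indicator g) := by
    intro a b hab
    apply Set.indicator_le_indicator_of_subset
    · apply Set.Ioi_subset_Ioi
      have : (a:ℝ) + 1 ≤ (b:ℝ) + 1 := by exact_mod_cast by omega
      exact inv_anti₀ (by positivity) this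
    · intro x; exact zero_le
  have key : ∀ x, (Set.Ioi (0:ℝ)).indicator g x
      = ⨆ n : ℕ, (Set.Ioi (((n:ℝ)+1)⁻¹)).indicator g x := by
    intro x
    rcases le_or_gt x 0 with hx | hx
    · rw [Set.indicator_of_notMem (by simpa using hx)]
      symm
      simp only [ENNReal.iSup_eq_zero]
      intro n
      rw [Set.indicator_of_notMem]
      simp only [Set.mem_Ioi, not_lt]
      exact hx.trans (by positivity)
    · rw [Set.indicator_of_mem (by simpa using hx)]
      apply le_antisymm
      · obtain ⟨n, hn⟩ := exists_nat_one_div_lt hx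
        refine le_iSup_of_le n ?_
        rw [Set.indicator_of_mem]
        simp only [Set.mem_Ioi]
        rw [one_div] at hn
        exact hn
      · exact iSup_le fun n => Set.indicator_le_self' (fun _ _ => zero_le) x
  calc ∫⁻ x in Set.Ioi (0:ℝ), g x
      = ∫⁻ x, (Set.Ioi (0:ℝ)).indicator g x := (lintegral_indicator measurableSet_Ioi g).symm
    _ = ∫⁻ x, ⨆ n : ℕ, (Set.Ioi (((n:ℝ)+1)⁻¹)).indicator g x := by simp_rw [key]
    _ = ⨆ n : ℕ, ∫⁻ x, (Set.Ioi (((n:ℝ)+1)⁻¹)).indicator g x :=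
        lintegral_iSup (fun n => hg.indicator measurableSet_Ioi) hmono
    _ ≤ C := by
        refine iSup_le fun n => ?_
        rw [lintegral_indicator measurableSet_Ioi]
        exact h _ (by positivity)

lemma gauss_eq : (fun t : ℝ => Real.exp (-t^2/2)) = fun t : ℝ => Real.exp (-(1/2) * t^2) := by
  funext t; ring_nf

lemma gauss_integrable : Integrable (fun t : ℝ => Real.exp (-t^2/2)) := by
  rw [gauss_eq]
  exact integrable_exp_neg_mul_sq (by norm_num)

lemma gauss_total : ∫ t : ℝ, Real.exp (-t^2/2) = Real.sqrt (2*π) := by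
  rw [gauss_eq, integral_gaussian]
  rw [show π / (1/2 : ℝ) = 2 * π by ring]

noncomputable def Psi (x : ℝ) : ℝ := ∫ t in Set.Iic x, Real.exp (-t^2/2)

lemma Psi_nonneg (x : ℝ) : 0 ≤ Psi x :=
  setIntegral_nonneg measurableSet_Iic (fun t _ => (Real.exp_pos _).le)

lemma Psi_tendsto : Tendsto Psi atTop (𝓝 (Real.sqrt (2*π))) := by
  rw [← gauss_total]
  exact (aecover_Iic (tendsto_id (α := ℝ))).integral_tendsto_of_countably_generated
    gauss_integrable

lemma Psi_hasDerivAt (x : ℝ) : HasDerivAt Psi (Real.exp (-x^2/2)) x := by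
  have hcont : Continuous (fun t : ℝ => Real.exp (-t^2/2)) := by continuity
  have key : Psi = fun y => Psi 0 + ∫ t in (0:ℝ)..y, Real.exp (-t^2/2) := by
    funext y
    rw [← intervalIntegral.integral_Iic_sub_Iic gauss_integrable.integrableOn
      gauss_integrable.integrableOn]
    unfold Psi; ring
  rw [key]
  exact ((intervalIntegral.integral_hasDerivAt_right
    gauss_integrable.intervalIntegrable
    (hcont.stronglyMeasurableAtFilter _ _)
    hcont.continuousAt)).const_add _


lemma w_hasDerivAt {p r : ℝ} (hr : r ≠ 0) :
    HasDerivAt (fun r : ℝ => r - p/r) (1 + p/r^2) r := by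
  have h1 : HasDerivAt (fun r : ℝ => p/r) (-(p/r^2)) r := by
    have := (hasDerivAt_inv hr).const_mul p
    simpa [div_eq_mul_inv, neg_div, mul_comm, sq] using this
  have := (hasDerivAt_id' r).sub h1
  exact this.congr_deriv (by ring)

lemma w_tendsto (p : ℝ) : Tendsto (fun r : ℝ => r - p/r) atTop atTop := by
  have h1 : Tendsto (fun r : ℝ => -(p/r)) atTop (𝓝 (-0)) :=
    (tendsto_const_nhds.div_atTop tendsto_id).neg
  rw [neg_zero] at h1
  simpa [sub_eq_add_neg] using tendsto_id.atTop_add h1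

lemma phi_deriv_measurable (p : ℝ) :
    Measurable (fun r : ℝ => ENNReal.ofReal (Real.exp (-(r - p/r)^2/2) * (1 + p/r^2))) := by
  apply ENNReal.measurable_ofReal.comp
  fun_prop

lemma phi_int_le {p : ℝ} (hp : 0 < p) :
    ∫⁻ r in Set.Ioi (0:ℝ), ENNReal.ofReal (Real.exp (-(r - p/r)^2/2) * (1 + p/r^2))
      ≤ ENNReal.ofReal (Real.sqrt (2*π)) := by
  apply lintegral_Ioi_zero_le (phi_deriv_measurable p)
  intro ε hε
  set Φ : ℝ → ℝ := fun r => Psi (r - p/r) with hΦ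
  set Φ' : ℝ → ℝ := fun r => Real.exp (-(r - p/r)^2/2) * (1 + p/r^2) with hΦ'
  have hderiv : ∀ r ∈ Set.Ici ε, HasDerivAt Φ (Φ' r) r := by
    intro r hr
    have hr0 : r ≠ 0 := (lt_of_lt_of_le hε hr).ne'
    exact (Psi_hasDerivAt (r - p/r)).comp r (w_hasDerivAt hr0)
  have hpos : ∀ r ∈ Set.Ioi ε, 0 ≤ Φ' r := by
    intro r hr
    have hr0 : 0 < r := hε.trans hr
    have : 0 ≤ 1 + p/r^2 := by positivity
    exact mul_nonneg (Real.exp_pos _).le this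
  have htend : Tendsto Φ atTop (𝓝 (Real.sqrt (2*π))) := Psi_tendsto.comp (w_tendsto p)
  have hcont : ContinuousWithinAt Φ (Set.Ici ε) ε :=
    (hderiv ε Set.self_mem_Ici).continuousAt.continuousWithinAt
  have hint : IntegrableOn Φ' (Set.Ioi ε) :=
    integrableOn_Ioi_deriv_of_nonneg hcont (fun x hx => hderiv x (Set.mem_Ici.mpr (le_of_lt hx))) hpos htend
  have heq : ∫ r in Set.Ioi ε, Φ' r = Real.sqrt (2*π) - Φ ε :=
    integral_Ioi_of_hasDerivAt_of_nonneg hcont (fun x hx => hderiv x (Set.mem_Ici.mpr (le_of_lt hx))) hpos htend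
  calc ∫⁻ r in Set.Ioi ε, ENNReal.ofReal (Φ' r)
      = ENNReal.ofReal (∫ r in Set.Ioi ε, Φ' r) :=
        (ofReal_integral_eq_lintegral_ofReal hint
          ((ae_restrict_iff' measurableSet_Ioi).mpr (ae_of_all _ hpos))).symm
    _ ≤ ENNReal.ofReal (Real.sqrt (2*π)) := by
        rw [heq]
        exact ENNReal.ofReal_le_ofReal (sub_le_self _ (Psi_nonneg _))

noncomputable def Gl (p : ℝ) : ℝ≥0∞ :=
  ∫⁻ r in Set.Ioi (0:ℝ), ENNReal.ofReal (r⁻¹ * Real.exp (-(r - p/r)^2/2))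

lemma Gl_le {p : ℝ} (hp : 0 < p) :
    Gl p ≤ ENNReal.ofReal (Real.sqrt (2*π) / (2 * Real.sqrt p)) := by
  have hsp : 0 < Real.sqrt p := Real.sqrt_pos.mpr hp
  calc Gl p
      ≤ ∫⁻ r in Set.Ioi (0:ℝ), ENNReal.ofReal ((2 * Real.sqrt p)⁻¹ *
          (Real.exp (-(r - p/r)^2/2) * (1 + p/r^2))) := by
        apply setLIntegral_mono (by apply ENNReal.measurable_ofReal.comp; fun_prop)
        intro r hr
        apply ENNReal.ofReal_le_ofReal
        have hr0 : 0 < r := hr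
        have hsq : Real.sqrt p ^ 2 = p := Real.sq_sqrt hp.le
        have key : r⁻¹ ≤ (2 * Real.sqrt p)⁻¹ * (1 + p/r^2) := by
          have hrw : (2 * Real.sqrt p)⁻¹ * (1 + p/r^2) = (r^2 + p) / (2 * Real.sqrt p * r^2) := by
            field_simp
          rw [hrw, inv_eq_one_div, div_le_div_iff₀ hr0 (by positivity)]
          nlinarith [sq_nonneg (r - Real.sqrt p), hr0.le, Real.sqrt_nonneg p]
        calc r⁻¹ * Real.exp (-(r - p/r)^2/2)
            ≤ ((2 * Real.sqrt p)⁻¹ * (1 + p/r^2)) * Real.exp (-(r - p/r)^2/2) :=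
              mul_le_mul_of_nonneg_right key (Real.exp_pos _).le
          _ = (2 * Real.sqrt p)⁻¹ * (Real.exp (-(r - p/r)^2/2) * (1 + p/r^2)) := by ring
    _ = ENNReal.ofReal ((2 * Real.sqrt p)⁻¹) *
          ∫⁻ r in Set.Ioi (0:ℝ), ENNReal.ofReal (Real.exp (-(r - p/r)^2/2) * (1 + p/r^2)) := by
        rw [← lintegral_const_mul _ (by apply ENNReal.measurable_ofReal.comp; fun_prop)]
        congr 1
        funext r
        rw [← ENNReal.ofReal_mul (by positivity)]
    _ ≤ ENNReal.ofReal ((2 * Real.sqrt p)⁻¹) * ENNReal.ofReal (Real.sqrt (2*π)) :=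
        mul_le_mul_right (phi_int_le hp) _
    _ = ENNReal.ofReal (Real.sqrt (2*π) / (2 * Real.sqrt p)) := by
        rw [← ENNReal.ofReal_mul (by positivity)]
        rw [div_eq_mul_inv, mul_comm]

lemma Gl_ge {p : ℝ} (hp : 0 < p) :
    ENNReal.ofReal (Real.exp (-2) / (Real.sqrt p + 1)) ≤ Gl p := by
  have hsp : 0 < Real.sqrt p := Real.sqrt_pos.mpr hp
  have hsub : Set.Ioc (Real.sqrt p) (Real.sqrt p + 1) ⊆ Set.Ioi (0:ℝ) := by
    intro x hx
    exact hsp.trans hx.1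
  have step1 : ∫⁻ r in Set.Ioc (Real.sqrt p) (Real.sqrt p + 1),
      ENNReal.ofReal (Real.exp (-2) / (Real.sqrt p + 1)) ≤ Gl p := by
    refine le_trans ?_ (lintegral_mono' (Measure.restrict_mono hsub le_rfl) le_rfl)
    apply setLIntegral_mono' measurableSet_Ioc
    intro r hr
    apply ENNReal.ofReal_le_ofReal
    have hr0 : 0 < r := hsp.trans hr.1
    have h1 : (Real.sqrt p + 1)⁻¹ ≤ r⁻¹ := by
      apply inv_anti₀ hr0 hr.2
    have hsq : Real.sqrt p ^ 2 = p := Real.sq_sqrt hp.le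
    have h2 : Real.exp (-2) ≤ Real.exp (-(r - p/r)^2/2) := by
      apply Real.exp_le_exp.mpr
      have hw0 : 0 ≤ r - p/r := by
        rw [sub_nonneg, div_le_iff₀ hr0]
        nlinarith [hr.1, hsp]
      have hw2 : r - p/r ≤ 2 := by
        have h3 : r * r - p ≤ 2 * r := by
          nlinarith [mul_nonneg (sub_nonneg.mpr hr.1.le) (sub_nonneg.mpr hr.2), hsq]
        have h4 : r - p/r = (r * r - p) / r := by field_simp
        rw [h4, div_le_iff₀ hr0]
        nlinarith [h3, hr0.le]
      nlinarith
    calc Real.exp (-2) / (Real.sqrt p + 1) = (Real.sqrt p + 1)⁻¹ * Real.exp (-2) := by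
          rw [div_eq_mul_inv, mul_comm]
      _ ≤ r⁻¹ * Real.exp (-(r - p/r)^2/2) := by
          apply mul_le_mul h1 h2 (Real.exp_pos _).le (by positivity)
  refine le_trans ?_ step1
  rw [setLIntegral_const]
  rw [Real.volume_Ioc]
  simp only [add_sub_cancel_left]
  rw [ENNReal.ofReal_one, mul_one]



noncomputable def J (m β : ℝ) : ℝ≥0∞ :=
  ∫⁻ r in Set.Ioi (0:ℝ), ∫⁻ r' in Set.Ioi (0:ℝ),
    ENNReal.ofReal (Real.exp (-(r - r') ^ 2 / 2 - β * r * r') * (r * r') ^ m)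

lemma stepA (m β : ℝ) {r : ℝ} (hr : 0 < r) :
    ∫⁻ r' in Set.Ioi (0:ℝ),
        ENNReal.ofReal (Real.exp (-(r - r') ^ 2 / 2 - β * r * r') * (r * r') ^ m)
      = ∫⁻ p in Set.Ioi (0:ℝ),
          ENNReal.ofReal (r⁻¹ * (Real.exp (-(r - p/r)^2/2 - β*p) * p^m)) := by
  have himg : (fun p : ℝ => p / r) '' Set.Ioi 0 = Set.Ioi 0 := by
    apply Set.ext; intro y
    constructor
    · rintro ⟨p, hp, rfl⟩; exact div_pos hp hr
    · intro hy; exact ⟨y * r, mul_pos hy hr, by field_simp⟩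
  have hder : ∀ p ∈ Set.Ioi (0:ℝ), HasDerivWithinAt (fun p : ℝ => p / r) r⁻¹ (Set.Ioi 0) p := by
    intro p _
    simpa [one_div] using ((hasDerivAt_id p).div_const r).hasDerivWithinAt
  have hinj : Set.InjOn (fun p : ℝ => p / r) (Set.Ioi 0) := by
    intro a _ b _ h
    simpa [div_eq_div_iff hr.ne' hr.ne', hr.ne'] using h
  conv_lhs => rw [← himg]
  rw [lintegral_image_1d measurableSet_Ioi hder hinj]
  refine setLIntegral_congr_fun measurableSet_Ioi (fun p hp => ?_)
  have h1 : r * (p / r) = p := by field_simp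
  have h2 : β * r * (p/r) = β * p := by field_simp
  rw [h1, h2, abs_of_pos (inv_pos.mpr hr), ← ENNReal.ofReal_mul (inv_pos.mpr hr).le]

lemma meas_aux (m β : ℝ) :
    Measurable (fun z : ℝ × ℝ =>
      ENNReal.ofReal (z.1⁻¹ * (Real.exp (-(z.1 - z.2/z.1)^2/2 - β*z.2) * z.2^m))) := by
  apply ENNReal.measurable_ofReal.comp
  fun_prop

lemma stepB (m β : ℝ) :
    J m β = ∫⁻ p in Set.Ioi (0:ℝ),
      ENNReal.ofReal (Real.exp (-(β*p)) * p^m) * Gl p := by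
  have h1 : J m β = ∫⁻ r in Set.Ioi (0:ℝ), ∫⁻ p in Set.Ioi (0:ℝ),
      ENNReal.ofReal (r⁻¹ * (Real.exp (-(r - p/r)^2/2 - β*p) * p^m)) := by
    refine setLIntegral_congr_fun measurableSet_Ioi (fun r hr => ?_)
    exact stepA m β hr
  rw [h1]
  rw [lintegral_lintegral_swap ((meas_aux m β).aemeasurable)]
  refine setLIntegral_congr_fun measurableSet_Ioi (fun p hp => ?_)
  have hp0 : 0 < p := hp
  calc ∫⁻ r in Set.Ioi (0:ℝ),
        ENNReal.ofReal (r⁻¹ * (Real.exp (-(r - p/r)^2/2 - β*p) * p^m))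
      = ∫⁻ r in Set.Ioi (0:ℝ), ENNReal.ofReal (Real.exp (-(β*p)) * p^m) *
          ENNReal.ofReal (r⁻¹ * Real.exp (-(r - p/r)^2/2)) := by
        refine setLIntegral_congr_fun measurableSet_Ioi (fun r hr => ?_)
        have hr0 : 0 < r := hr
        rw [← ENNReal.ofReal_mul (by positivity)]
        congr 1
        rw [sub_eq_add_neg, Real.exp_add]
        ring
    _ = ENNReal.ofReal (Real.exp (-(β*p)) * p^m) * Gl p := by
        rw [Gl]
        rw [lintegral_const_mul' _ _ ENNReal.ofReal_ne_top]

lemma gammaIntegrand_integrableOn {s b : ℝ} (hs : 0 < s) (hb : 0 < b) :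
    IntegrableOn (fun p : ℝ => p ^ (s - 1) * Real.exp (-(b * p))) (Set.Ioi 0) := by
  have := integrableOn_rpow_mul_exp_neg_mul_rpow (p := 1) (s := s - 1) (b := b)
    (by linarith) one_pos hb
  simpa [Real.rpow_one] using this

lemma gammaIntegral_scaled {s b : ℝ} (hs : 0 < s) (hb : 0 < b) :
    ∫ p in Set.Ioi (0:ℝ), p ^ (s - 1) * Real.exp (-(b * p))
      = (1/b) ^ s * Real.Gamma s :=
  Real.integral_rpow_mul_exp_neg_mul_Ioi hs hb

lemma Gamma_ge_inv_e {s : ℝ} (hs : 1 ≤ s) : Real.exp (-1) ≤ Real.Gamma s := by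
  have hs0 : 0 < s := by linarith
  rw [Real.Gamma_eq_integral hs0]
  have hint : IntegrableOn (fun t : ℝ => Real.exp (-t) * t ^ (s - 1)) (Set.Ioi 0) :=
    Real.GammaIntegral_convergent hs0
  have h1 : ∫ t in Set.Ioi (1:ℝ), Real.exp (-t)
      ≤ ∫ t in Set.Ioi (1:ℝ), Real.exp (-t) * t ^ (s - 1) := by
    apply setIntegral_mono_on
    · simpa using exp_neg_integrableOn_Ioi 1 (one_pos)
    · exact hint.mono_set (Set.Ioi_subset_Ioi zero_le_one)
    · exact measurableSet_Ioi
    · intro t ht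
      have h2 : (1:ℝ) ≤ t ^ (s - 1) := Real.one_le_rpow (le_of_lt ht) (by linarith)
      nlinarith [Real.exp_pos (-t)]
  have h2 : ∫ t in Set.Ioi (1:ℝ), Real.exp (-t) * t ^ (s - 1)
      ≤ ∫ t in Set.Ioi (0:ℝ), Real.exp (-t) * t ^ (s - 1) := by
    apply setIntegral_mono_set hint
    · filter_upwards [self_mem_ae_restrict (measurableSet_Ioi : MeasurableSet (Set.Ioi (0:ℝ)))]
      intro t ht
      have ht0 : (0:ℝ) < t := ht
      positivity
    · exact HasSubset.Subset.eventuallyLE (Set.Ioi_subset_Ioi zero_le_one)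
  calc Real.exp (-1) = ∫ t in Set.Ioi (1:ℝ), Real.exp (-t) := (integral_exp_neg_Ioi 1).symm
    _ ≤ _ := h1.trans h2

lemma tail_bound {m β : ℝ} (hm : 0 ≤ m) (hβ : 0 < β) (hβ1 : β ≤ 1) :
    1/4 * ((1/β) ^ (m + 1/2) * Real.Gamma (m + 1/2))
      ≤ ∫ p in Set.Ioi (1/16 : ℝ), p ^ (m + 1/2 - 1) * Real.exp (-(β*p)) := by
  set s := m + 1/2 with hs_def
  have hs : 0 < s := by simp [hs_def]; linarith
  set f : ℝ → ℝ := fun p => p ^ (s - 1) * Real.exp (-(β*p)) with hf_def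
  have hint : IntegrableOn f (Set.Ioi 0) := gammaIntegrand_integrableOn hs hβ
  have hint1 : IntegrableOn f (Set.Ioc 0 (1/16)) := hint.mono_set Set.Ioc_subset_Ioi_self
  have hint2 : IntegrableOn f (Set.Ioi (1/16:ℝ)) :=
    hint.mono_set (Set.Ioi_subset_Ioi (by norm_num))
  have hdisj : Disjoint (Set.Ioc (0:ℝ) (1/16)) (Set.Ioi (1/16:ℝ)) :=
    Set.disjoint_left.mpr fun x hx hx' => absurd hx.2 (not_le.mpr hx')
  have hsplit : ∫ p in Set.Ioi (0:ℝ), f p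
      = (∫ p in Set.Ioc (0:ℝ) (1/16), f p) + ∫ p in Set.Ioi (1/16:ℝ), f p := by
    rw [← setIntegral_union hdisj measurableSet_Ioi hint1 hint2,
      Set.Ioc_union_Ioi_eq_Ioi (by norm_num : (0:ℝ) ≤ 1/16)]
  have htotal : ∫ p in Set.Ioi (0:ℝ), f p = (1/β) ^ s * Real.Gamma s :=
    gammaIntegral_scaled hs hβ
  -- head bound
  have hrint : IntegrableOn (fun p : ℝ => p ^ (s-1)) (Set.Ioc (0:ℝ) (1/16)) :=
    (intervalIntegral.intervalIntegrable_rpow' (by linarith)).1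
  have hhead1 : ∫ p in Set.Ioc (0:ℝ) (1/16), f p
      ≤ ∫ p in Set.Ioc (0:ℝ) (1/16), p ^ (s-1) := by
    apply setIntegral_mono_on hint1 hrint measurableSet_Ioc
    intro p hp
    have hp0 : 0 < p := hp.1
    have : Real.exp (-(β*p)) ≤ 1 := by
      rw [Real.exp_le_one_iff]
      nlinarith
    exact mul_le_of_le_one_right (Real.rpow_nonneg hp0.le _) this
  have hhead2 : ∫ p in Set.Ioc (0:ℝ) (1/16), (fun p : ℝ => p ^ (s-1)) p
      = (1/16 : ℝ) ^ s / s := by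
    rw [← intervalIntegral.integral_of_le (by norm_num : (0:ℝ) ≤ 1/16)]
    rw [integral_rpow (Or.inl (by linarith))]
    rw [Real.zero_rpow (by linarith : s - 1 + 1 ≠ 0)]
    rw [sub_add_cancel]
    ring
  -- (1/16)^s ≤ 1/4 and 1/4 ≤ 3/4 * exp (-1) ≤ 3/4 * Γ(s+1)
  have hq : (1/16 : ℝ) ^ s ≤ 1/4 := by
    have h1 : (1/16 : ℝ) ^ s ≤ (1/16 : ℝ) ^ (1/2 : ℝ) := by
      apply Real.rpow_le_rpow_of_exponent_ge (by norm_num) (by norm_num)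
      simp [hs_def]; linarith
    have h2 : (1/16 : ℝ) ^ (1/2 : ℝ) = 1/4 := by
      rw [show (1/16 : ℝ) = (1/4 : ℝ) ^ (2:ℕ) by norm_num, ← Real.rpow_natCast,
        ← Real.rpow_mul (by norm_num)]
      norm_num
    linarith
  have hΓ1 : Real.exp (-1) ≤ Real.Gamma (s + 1) := Gamma_ge_inv_e (by linarith)
  have he3 : Real.exp (-1) ≥ 1/3 := by
    rw [Real.exp_neg]
    rw [ge_iff_le, le_inv_comm₀ (by norm_num) (Real.exp_pos 1)]
    have := Real.exp_one_lt_d9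
    linarith
  have hΓrec : s * Real.Gamma s = Real.Gamma (s + 1) := (Real.Gamma_add_one hs.ne').symm
  have hhead : ∫ p in Set.Ioc (0:ℝ) (1/16), f p ≤ 3/4 * Real.Gamma s := by
    have h4 : (1/16:ℝ) ^ s / s ≤ 3/4 * Real.Gamma s := by
      rw [div_le_iff₀ hs]
      calc (1/16:ℝ) ^ s ≤ 1/4 := hq
        _ ≤ 3/4 * Real.exp (-1) := by linarith
        _ ≤ 3/4 * Real.Gamma (s+1) := by linarith
        _ = 3/4 * Real.Gamma s * s := by rw [← hΓrec]; ring
    calc ∫ p in Set.Ioc (0:ℝ) (1/16), f p ≤ (1/16:ℝ) ^ s / s := by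
          rw [← hhead2]; exact hhead1
      _ ≤ 3/4 * Real.Gamma s := h4
  have hΓpos : 0 < Real.Gamma s := Real.Gamma_pos_of_pos hs
  have hbig : Real.Gamma s ≤ (1/β) ^ s * Real.Gamma s := by
    nlinarith [Real.one_le_rpow (one_le_one_div hβ hβ1) hs.le]
  linarith [hsplit, htotal]


lemma J_le {m β : ℝ} (hm : 0 ≤ m) (hβ : 0 < β) :
    J m β ≤ ENNReal.ofReal (Real.sqrt (2*π)/2 * ((1/β) ^ (m + 1/2) * Real.Gamma (m + 1/2))) := by
  rw [stepB]
  have hs : (0:ℝ) < m + 1/2 := by linarith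
  calc ∫⁻ p in Set.Ioi (0:ℝ), ENNReal.ofReal (Real.exp (-(β*p)) * p^m) * Gl p
      ≤ ∫⁻ p in Set.Ioi (0:ℝ),
          ENNReal.ofReal (Real.sqrt (2*π)/2 * (p ^ (m + 1/2 - 1) * Real.exp (-(β*p)))) := by
        apply setLIntegral_mono' measurableSet_Ioi
        intro p hp
        have hp0 : 0 < p := hp
        have hsp : 0 < Real.sqrt p := Real.sqrt_pos.mpr hp0
        calc ENNReal.ofReal (Real.exp (-(β*p)) * p^m) * Gl p
            ≤ ENNReal.ofReal (Real.exp (-(β*p)) * p^m) *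
                ENNReal.ofReal (Real.sqrt (2*π) / (2 * Real.sqrt p)) :=
              mul_le_mul_right (Gl_le hp0) _
          _ = ENNReal.ofReal (Real.exp (-(β*p)) * p^m * (Real.sqrt (2*π) / (2 * Real.sqrt p))) :=
              (ENNReal.ofReal_mul (by positivity)).symm
          _ = ENNReal.ofReal (Real.sqrt (2*π)/2 * (p ^ (m + 1/2 - 1) * Real.exp (-(β*p)))) := by
              congr 1
              have hpm : p ^ (m + 1/2 - 1) = p ^ m / Real.sqrt p := by
                rw [Real.sqrt_eq_rpow, ← Real.rpow_sub hp0]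
                congr 1; ring
              rw [hpm]
              field_simp
    _ = ENNReal.ofReal (Real.sqrt (2*π)/2 *
          ∫ p in Set.Ioi (0:ℝ), p ^ (m + 1/2 - 1) * Real.exp (-(β*p))) := by
        rw [← integral_const_mul]
        rw [← ofReal_integral_eq_lintegral_ofReal]
        · exact (gammaIntegrand_integrableOn hs hβ).const_mul _
        · refine (ae_restrict_iff' measurableSet_Ioi).mpr (ae_of_all _ fun p hp => ?_)
          have hp0 : (0:ℝ) < p := hp
          positivity
    _ = ENNReal.ofReal (Real.sqrt (2*π)/2 * ((1/β) ^ (m + 1/2) * Real.Gamma (m + 1/2))) := by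
        rw [gammaIntegral_scaled hs hβ]

lemma J_ge {m β : ℝ} (hm : 0 ≤ m) (hβ : 0 < β) (hβ1 : β ≤ 1) :
    ENNReal.ofReal (Real.exp (-2)/20 * ((1/β) ^ (m + 1/2) * Real.Gamma (m + 1/2)))
      ≤ J m β := by
  rw [stepB]
  have hs : (0:ℝ) < m + 1/2 := by linarith
  have hΓ : 0 < Real.Gamma (m + 1/2) := Real.Gamma_pos_of_pos hs
  have smono : ∫⁻ p in Set.Ioi (1/16:ℝ), ENNReal.ofReal (Real.exp (-(β*p)) * p^m) * Gl p
      ≤ ∫⁻ p in Set.Ioi (0:ℝ), ENNReal.ofReal (Real.exp (-(β*p)) * p^m) * Gl p :=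
    lintegral_mono' (Measure.restrict_mono (Set.Ioi_subset_Ioi (by norm_num)) le_rfl) le_rfl
  refine le_trans ?_ smono
  have hint2 : IntegrableOn (fun p : ℝ => p ^ (m + 1/2 - 1) * Real.exp (-(β*p)))
      (Set.Ioi (1/16:ℝ)) :=
    (gammaIntegrand_integrableOn hs hβ).mono_set (Set.Ioi_subset_Ioi (by norm_num))
  calc ENNReal.ofReal (Real.exp (-2)/20 * ((1/β) ^ (m + 1/2) * Real.Gamma (m + 1/2)))
      = ENNReal.ofReal (Real.exp (-2)/5 *
          (1/4 * ((1/β) ^ (m + 1/2) * Real.Gamma (m + 1/2)))) := by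
        congr 1; ring
    _ ≤ ENNReal.ofReal (Real.exp (-2)/5 *
          ∫ p in Set.Ioi (1/16:ℝ), p ^ (m + 1/2 - 1) * Real.exp (-(β*p))) := by
        apply ENNReal.ofReal_le_ofReal
        exact mul_le_mul_of_nonneg_left (tail_bound hm hβ hβ1) (by positivity)
    _ = ∫⁻ p in Set.Ioi (1/16:ℝ),
          ENNReal.ofReal (Real.exp (-2)/5 * (p ^ (m + 1/2 - 1) * Real.exp (-(β*p)))) := by
        rw [← integral_const_mul]
        apply ofReal_integral_eq_lintegral_ofReal
        · exact hint2.const_mul _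
        · refine (ae_restrict_iff' measurableSet_Ioi).mpr (ae_of_all _ fun p hp => ?_)
          have hp0 : (0:ℝ) < p := lt_trans (by norm_num) hp
          positivity
    _ ≤ ∫⁻ p in Set.Ioi (1/16:ℝ), ENNReal.ofReal (Real.exp (-(β*p)) * p^m) * Gl p := by
        apply setLIntegral_mono' measurableSet_Ioi
        intro p hp
        have hp0 : (0:ℝ) < p := lt_trans (by norm_num) hp
        have hsp : 0 < Real.sqrt p := Real.sqrt_pos.mpr hp0
        have hsp4 : 1/4 ≤ Real.sqrt p := by
          nlinarith [Real.sq_sqrt hp0.le, Real.sqrt_nonneg p, (show (1/16:ℝ) < p from hp).le]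
        have hpm : p ^ (m + 1/2 - 1) = p ^ m / Real.sqrt p := by
          rw [Real.sqrt_eq_rpow, ← Real.rpow_sub hp0]
          congr 1; ring
        have key : Real.exp (-2)/5 * (p ^ (m + 1/2 - 1) * Real.exp (-(β*p)))
            ≤ Real.exp (-(β*p)) * p^m * (Real.exp (-2) / (Real.sqrt p + 1)) := by
          rw [hpm]
          have h6 : (1:ℝ)/(5*Real.sqrt p) ≤ 1/(Real.sqrt p + 1) := by
            apply one_div_le_one_div_of_le (by positivity)
            linarith
          have e1 : Real.exp (-2)/5 * (p^m / Real.sqrt p * Real.exp (-(β*p)))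
              = (Real.exp (-2) * p^m * Real.exp (-(β*p))) * (1/(5*Real.sqrt p)) := by
            field_simp
          have e2 : Real.exp (-(β*p)) * p^m * (Real.exp (-2) / (Real.sqrt p + 1))
              = (Real.exp (-2) * p^m * Real.exp (-(β*p))) * (1/(Real.sqrt p + 1)) := by
            field_simp
          rw [e1, e2]
          apply mul_le_mul_of_nonneg_left h6
          positivity
        calc ENNReal.ofReal (Real.exp (-2)/5 * (p ^ (m + 1/2 - 1) * Real.exp (-(β*p))))
            ≤ ENNReal.ofReal (Real.exp (-(β*p)) * p^m * (Real.exp (-2) / (Real.sqrt p + 1))) :=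
              ENNReal.ofReal_le_ofReal key
          _ = ENNReal.ofReal (Real.exp (-(β*p)) * p^m) *
              ENNReal.ofReal (Real.exp (-2) / (Real.sqrt p + 1)) :=
              ENNReal.ofReal_mul (by positivity)
          _ ≤ ENNReal.ofReal (Real.exp (-(β*p)) * p^m) * Gl p :=
              mul_le_mul_right (Gl_ge hp0) _


lemma Ifun_eq {m β : ℝ} (hJ : J m β ≠ ⊤) : Ifun m β = (J m β).toReal := by
  have hmeas : Measurable (fun z : ℝ × ℝ =>
      ENNReal.ofReal (Real.exp (-(z.1 - z.2) ^ 2 / 2 - β * z.1 * z.2) * (z.1 * z.2) ^ m)) := by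
    apply ENNReal.measurable_ofReal.comp
    fun_prop
  have hg : Measurable (fun r : ℝ => ∫⁻ r' in Set.Ioi (0:ℝ),
      ENNReal.ofReal (Real.exp (-(r - r') ^ 2 / 2 - β * r * r') * (r * r') ^ m)) :=
    Measurable.lintegral_prod_right hmeas
  have step1 : Ifun m β = ∫ r in Set.Ioi (0:ℝ), (∫⁻ r' in Set.Ioi (0:ℝ),
      ENNReal.ofReal (Real.exp (-(r - r') ^ 2 / 2 - β * r * r') * (r * r') ^ m)).toReal := by
    refine setIntegral_congr_fun measurableSet_Ioi (fun r hr => ?_)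
    have hr0 : (0:ℝ) < r := hr
    apply integral_eq_lintegral_of_nonneg_ae
    · refine (ae_restrict_iff' measurableSet_Ioi).mpr (ae_of_all _ fun r' hr' => ?_)
      have hr'0 : (0:ℝ) < r' := hr'
      positivity
    · apply Measurable.aestronglyMeasurable
      fun_prop
  rw [step1]
  exact integral_toReal (hg.aemeasurable) (ae_lt_top hg hJ)

/-- Two-sided bounds: `I_m(β) ≤ (√(2π)/2) β^{-m-1/2} Γ(m+1/2)` and there exists an
absolute constant `b₀ > 0` with `I_m(β) ≥ b₀ β^{-m-1/2} Γ(m+1/2)`, for all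
`m ≥ 0` and `0 < β ≤ 1`. -/
theorem statement6 :
    (∀ m : ℝ, 0 ≤ m → ∀ β : ℝ, 0 < β → β ≤ 1 →
      Ifun m β ≤ Real.sqrt (2 * π) / 2 * β ^ (-m - 1 / 2) * Real.Gamma (m + 1 / 2)) ∧
    ∃ b₀ : ℝ, 0 < b₀ ∧ ∀ m : ℝ, 0 ≤ m → ∀ β : ℝ, 0 < β → β ≤ 1 →
      b₀ * β ^ (-m - 1 / 2) * Real.Gamma (m + 1 / 2) ≤ Ifun m β := by
  have hbase : ∀ m β : ℝ, 0 ≤ m → 0 < β →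
      (1/β : ℝ) ^ (m + 1/2) = β ^ (-m - 1/2) := by
    intro m β hm hβ
    rw [one_div, ← Real.rpow_neg_one β, ← Real.rpow_mul hβ.le]
    congr 1; ring
  constructor
  · intro m hm β hβ hβ1
    have hJne : J m β ≠ ⊤ :=
      ne_top_of_le_ne_top ENNReal.ofReal_ne_top (J_le hm hβ)
    rw [Ifun_eq hJne]
    have h1 := ENNReal.toReal_le_of_le_ofReal
      (by positivity : (0:ℝ) ≤ Real.sqrt (2*π)/2 * ((1/β) ^ (m + 1/2) * Real.Gamma (m + 1/2)))
      (J_le hm hβ)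
    calc (J m β).toReal
        ≤ Real.sqrt (2*π)/2 * ((1/β) ^ (m + 1/2) * Real.Gamma (m + 1/2)) := h1
      _ = Real.sqrt (2*π)/2 * β ^ (-m - 1/2) * Real.Gamma (m + 1/2) := by
          rw [hbase m β hm hβ]; ring
  · refine ⟨Real.exp (-2)/20, by positivity, ?_⟩
    intro m hm β hβ hβ1
    have hJne : J m β ≠ ⊤ :=
      ne_top_of_le_ne_top ENNReal.ofReal_ne_top (J_le hm hβ)
    rw [Ifun_eq hJne]
    have h2 := ENNReal.toReal_mono hJne (J_ge hm hβ hβ1)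
    rw [ENNReal.toReal_ofReal] at h2
    · calc Real.exp (-2)/20 * β ^ (-m - 1/2) * Real.Gamma (m + 1/2)
          = Real.exp (-2)/20 * ((1/β) ^ (m + 1/2) * Real.Gamma (m + 1/2)) := by
            rw [hbase m β hm hβ]; ring
        _ ≤ (J m β).toReal := h2
    · have hΓ : 0 < Real.Gamma (m + 1/2) := Real.Gamma_pos_of_pos (by linarith)
      positivity
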